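/- Let σ_w² > 0, 0 ≤ P_min < P_max, p_j ∈ [0,1], and P_a > 0 be reals with P_min < P_a ≤ P_L, where P_L = P_max − P_min, and let μ = (1−p_j)·δ_{σ_w²} + p_j·Unif[σ_w² + P_min, σ_w² + P_max]. Then the supremum over γ ∈ ℝ of μ([γ − P_a, γ)) equals max(1 − p_j·(P_max − P_a)/P_L, p_j·P_a/P_L); equivalently, the warden's minimum total detection error probability ξ* equals min(p_j·(P_max − P_a)/P_L, 1 − p_j·P_a/P_L). -/

import Mathlib

open MeasureTheory Set

lemma vol_Ico_inter_Icc (a b c d : ℝ) :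
    volume (Ico a b ∩ Icc c d) = ENNReal.ofReal (min b d - max a c) := by
  apply le_antisymm
  · calc volume (Ico a b ∩ Icc c d) ≤ volume (Icc (max a c) (min b d)) := by
          apply measure_mono
          rintro x ⟨⟨h1, h2⟩, h3, h4⟩
          exact ⟨max_le h1 h3, le_min h2.le h4⟩
        _ = ENNReal.ofReal (min b d - max a c) := Real.volume_Icc
  · calc ENNReal.ofReal (min b d - max a c) = volume (Ico (max a c) (min b d)) := Real.volume_Ico.symm
        _ ≤ volume (Ico a b ∩ Icc c d) := by
          apply measure_mono
          rintro x ⟨h1, h2⟩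
          exact ⟨⟨(le_max_left a c).trans h1, h2.trans_le (min_le_left b d)⟩,
                 (le_max_right a c).trans h1, (h2.trans_le (min_le_right b d)).le⟩

theorem xi_star_case_Pmin_lt_Pa_le_PL
    (σw Pmin Pmax pj Pa : ℝ)
    (hσw : 0 < σw) (hPmin : 0 ≤ Pmin) (hlt : Pmin < Pmax)
    (hpj0 : 0 ≤ pj) (hpj1 : pj ≤ 1) (hPa : 0 < Pa)
    (hcase1 : Pmin < Pa) (hcase2 : Pa ≤ Pmax - Pmin)
    (μ : Measure ℝ)
    (hμ : μ = ENNReal.ofReal (1 - pj) • Measure.dirac σw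
        + ENNReal.ofReal pj •
          ((ENNReal.ofReal (Pmax - Pmin))⁻¹ •
            volume.restrict (Icc (σw + Pmin) (σw + Pmax)))) :
    (⨆ γ : ℝ, μ (Ico (γ - Pa) γ))
      = ENNReal.ofReal
          (max (1 - pj * (Pmax - Pa) / (Pmax - Pmin)) (pj * Pa / (Pmax - Pmin))) ∧
    (1 - ⨆ γ : ℝ, μ (Ico (γ - Pa) γ))
      = ENNReal.ofReal
          (min (pj * (Pmax - Pa) / (Pmax - Pmin)) (1 - pj * Pa / (Pmax - Pmin))) := by
  set PL := Pmax - Pmin with hPL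
  have hPLpos : 0 < PL := by simp only [hPL]; linarith
  have hpj1' : 0 ≤ 1 - pj := by linarith
  -- evaluation of μ on Ico (γ-Pa) γ
  have heval : ∀ γ : ℝ, μ (Ico (γ - Pa) γ)
      = (if σw ∈ Ico (γ - Pa) γ then ENNReal.ofReal (1 - pj) else 0)
        + ENNReal.ofReal (pj * ((min γ (σw + Pmax) - max (γ - Pa) (σw + Pmin)) / PL)) := by
    intro γ
    rw [hμ]
    rw [Measure.add_apply, Measure.smul_apply, Measure.smul_apply, Measure.smul_apply,
      Measure.dirac_apply' _ measurableSet_Ico,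
      Measure.restrict_apply measurableSet_Ico, vol_Ico_inter_Icc]
    rw [Set.indicator_apply]
    congr 1
    · by_cases h : σw ∈ Ico (γ - Pa) γ <;> simp [h]
    · rw [smul_eq_mul, smul_eq_mul, ENNReal.ofReal_mul hpj0,
        ENNReal.ofReal_div_of_pos hPLpos, ENNReal.div_eq_inv_mul]
  set x := 1 - pj * (Pmax - Pa) / PL with hx
  set y := pj * Pa / PL with hy
  have hfrac1 : pj * (Pmax - Pa) / PL ≤ 1 := by
    rw [mul_div_assoc]
    exact mul_le_one₀ hpj1 (div_nonneg (by linarith) hPLpos.le)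
      ((div_le_one hPLpos).mpr (by linarith))
  have hfrac1' : 0 ≤ pj * (Pmax - Pa) / PL :=
    div_nonneg (mul_nonneg hpj0 (by linarith)) hPLpos.le
  have hy0 : 0 ≤ y := div_nonneg (mul_nonneg hpj0 hPa.le) hPLpos.le
  have hy1 : y ≤ 1 := by
    rw [hy, mul_div_assoc]
    exact mul_le_one₀ hpj1 (div_nonneg hPa.le hPLpos.le) ((div_le_one hPLpos).mpr hcase2)
  have hx0 : 0 ≤ x := by rw [hx]; linarith
  have hx1 : x ≤ 1 := by rw [hx]; linarith
  -- value at γ₁ = σw + Pa equals x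
  have hval1 : μ (Ico (σw + Pa - Pa) (σw + Pa)) = ENNReal.ofReal x := by
    rw [heval]
    have hmem : σw ∈ Ico (σw + Pa - Pa) (σw + Pa) := by
      constructor <;> simp <;> linarith
    rw [if_pos hmem]
    have h1 : min (σw + Pa) (σw + Pmax) = σw + Pa := min_eq_left (by linarith)
    have h2 : max (σw + Pa - Pa) (σw + Pmin) = σw + Pmin := max_eq_right (by linarith)
    rw [h1, h2, ← ENNReal.ofReal_add hpj1'
      (mul_nonneg hpj0 (div_nonneg (by linarith) hPLpos.le))]
    congr 1
    rw [hx]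
    field_simp
    ring
  -- bound for all γ
  have hbound : ∀ γ : ℝ, μ (Ico (γ - Pa) γ) ≤ ENNReal.ofReal (max x y) := by
    intro γ
    rw [heval]
    by_cases hmem : σw ∈ Ico (γ - Pa) γ
    · rw [if_pos hmem]
      obtain ⟨hm1, hm2⟩ := hmem
      have ht' : min γ (σw + Pmax) - max (γ - Pa) (σw + Pmin) ≤ Pa - Pmin := by
        have h1 := min_le_left γ (σw + Pmax)
        have h2 := le_max_right (γ - Pa) (σw + Pmin)
        linarith
      calc ENNReal.ofReal (1 - pj) + ENNReal.ofReal (pj * ((min γ (σw + Pmax) - max (γ - Pa) (σw + Pmin)) / PL))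
          ≤ ENNReal.ofReal (1 - pj) + ENNReal.ofReal (pj * ((Pa - Pmin) / PL)) := by
            gcongr
        _ = ENNReal.ofReal (1 - pj + pj * ((Pa - Pmin) / PL)) :=
            (ENNReal.ofReal_add hpj1'
              (mul_nonneg hpj0 (div_nonneg (by linarith) hPLpos.le))).symm
        _ = ENNReal.ofReal x := by
            congr 1; rw [hx]; field_simp; ring
        _ ≤ ENNReal.ofReal (max x y) := ENNReal.ofReal_le_ofReal (le_max_left x y)
    · rw [if_neg hmem, zero_add]
      apply ENNReal.ofReal_le_ofReal
      refine le_trans ?_ (le_max_right x y)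
      rw [hy, mul_div_assoc]
      apply mul_le_mul_of_nonneg_left ?_ hpj0
      apply div_le_div_of_nonneg_right ?_ hPLpos.le
      have h1 : min γ (σw + Pmax) ≤ γ := min_le_left _ _
      have h2 : γ - Pa ≤ max (γ - Pa) (σw + Pmin) := le_max_left _ _
      linarith
  -- the supremum
  have hsup : (⨆ γ : ℝ, μ (Ico (γ - Pa) γ)) = ENNReal.ofReal (max x y) := by
    apply le_antisymm (iSup_le hbound)
    rcases le_or_gt y x with hxy | hxy
    · rw [max_eq_left hxy]
      rw [← hval1]
      exact le_iSup (fun γ => μ (Ico (γ - Pa) γ)) (σw + Pa)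
    · rw [max_eq_right hxy.le]
      -- in this case Pmin > 0
      have hPminpos : 0 < Pmin := by
        by_contra h
        push_neg at h
        have hPmin0 : Pmin = 0 := le_antisymm h hPmin
        -- then x = 1 - pj + y ≥ y
        have hPLeq : PL = Pmax := by rw [hPL, hPmin0, sub_zero]
        have : x = 1 - pj + y := by
          rw [hx, hy, hPLeq]
          have hPmaxne : Pmax ≠ 0 := by linarith
          field_simp
          ring
        linarith
      have hval2 : μ (Ico (σw + Pmin + Pa - Pa) (σw + Pmin + Pa)) = ENNReal.ofReal y := by
        rw [heval]
        have hmem : σw ∉ Ico (σw + Pmin + Pa - Pa) (σw + Pmin + Pa) := by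
          intro ⟨h1, _⟩
          simp at h1
          linarith
        rw [if_neg hmem, zero_add]
        have h1 : min (σw + Pmin + Pa) (σw + Pmax) = σw + Pmin + Pa :=
          min_eq_left (by linarith)
        have h2 : max (σw + Pmin + Pa - Pa) (σw + Pmin) = σw + Pmin :=
          max_eq_right (by linarith)
        rw [h1, h2]
        congr 1
        rw [hy]
        field_simp
        ring
      rw [← hval2]
      exact le_iSup (fun γ => μ (Ico (γ - Pa) γ)) (σw + Pmin + Pa)
  refine ⟨hsup, ?_⟩
  rw [hsup]
  have hmax1 : max x y ≤ 1 := max_le hx1 hy1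
  have hmax0 : 0 ≤ max x y := le_trans hx0 (le_max_left x y)
  rw [show (1 : ENNReal) = ENNReal.ofReal 1 from ENNReal.ofReal_one.symm,
    ← ENNReal.ofReal_sub _ hmax0]
  congr 1
  have hminmax : 1 - max x y = min (1 - x) (1 - y) := by
    rcases max_cases x y with ⟨h1, h2⟩ | ⟨h1, h2⟩ <;> rcases min_cases (1 - x) (1 - y) with ⟨h3, h4⟩ | ⟨h3, h4⟩ <;> linarith
  rw [hminmax]
  congr 1
  rw [hx]; ring
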